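/- Let G : B ⟶ C be a functor between groupoids that is a fibration of groupoids (i.e., for every object b' in B and every arrow β : c ⟶ G b' in C there exists an arrow α : b ⟶ b' in B with G α = β). Let F : A ⟶ B and H : A ⟶ C be functors with a natural isomorphism β : H ≅ F ⋙ G. Then there exists a functor F' : A ⟶ B with F' ⋙ G = H (strict equality) and a natural isomorphism α : F' ≅ F such that G applied to α equals β. -/

import Mathlib

open CategoryTheory

/-- A functor between groupoids is a fibration of groupoids if every arrow into an
object of the form `G b'` lifts to an arrow into `b'`. -/
def IsGrpdFibration {B C : Type*} [Groupoid B] [Groupoid C] (G : B ⥤ C) : Prop :=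
  ∀ (b' : B) (c : C) (β : c ⟶ G.obj b'),
    ∃ (b : B) (α : b ⟶ b') (h : G.obj b = c), G.map α = eqToHom h ≫ β

theorem stmt_3 {A B C : Type*} [Groupoid A] [Groupoid B] [Groupoid C]
    (G : B ⥤ C) (hG : IsGrpdFibration G)
    (F : A ⥤ B) (H : A ⥤ C) (β : H ≅ F ⋙ G) :
    ∃ (F' : A ⥤ B) (h : F' ⋙ G = H) (α : F' ≅ F),
      Functor.isoWhiskerRight α G = eqToIso h ≪≫ β := by
  choose b lift hb heq using fun a => hG (F.obj a) (H.obj a) (β.hom.app a)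
  have hinv : ∀ a, G.map (Groupoid.inv (lift a)) =
      Groupoid.inv (β.hom.app a) ≫ eqToHom (hb a).symm := by
    intro a
    have : G.map (lift a) ≫ G.map (Groupoid.inv (lift a)) = 𝟙 _ := by
      rw [← G.map_comp]; simp
    rw [heq] at this
    calc G.map (Groupoid.inv (lift a))
        = Groupoid.inv (β.hom.app a) ≫ eqToHom (hb a).symm ≫
          ((eqToHom (hb a) ≫ β.hom.app a) ≫ G.map (Groupoid.inv (lift a))) := by simp
      _ = _ := by rw [this]; simp
  let F' : A ⥤ B :=
    { obj := b
      map := fun {a a'} f => lift a ≫ F.map f ≫ Groupoid.inv (lift a')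
      map_id := fun a => by simp
      map_comp := fun f g => by simp }
  have hGF : F' ⋙ G = H := by
    refine CategoryTheory.Functor.ext hb ?_
    intro a a' f
    have := β.hom.naturality f
    simp only [Functor.comp_obj, Functor.comp_map, F']
    rw [Functor.map_comp, Functor.map_comp, heq, hinv]
    have this2 : β.hom.app a ≫ G.map (F.map f) = H.map f ≫ β.hom.app a' := by
      simp only [Functor.comp_map] at this; exact this.symm
    simp only [Category.assoc]
    rw [reassoc_of% this2]
    simp
  refine ⟨F', hGF, NatIso.ofComponents (fun a => asIso (lift a)) (fun f => by simp [F']), ?_⟩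
  ext a
  simp [heq, eqToHom_app]
  exact heq a
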